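/- For any simple graph G on n vertices with average degree d, the number of simple 4-cycles satisfies C_4(G) ≥ C_3(G)·(C_3(G)/(nd) − 1), where C_k(G) counts closed k-walks tracing simple k-cycles. -/

import Mathlib

open Finset

/-- The number of closed `k`-walks in `G` that trace a simple `k`-cycle: injective maps
`c : Fin k → V` such that consecutive vertices (cyclically) are adjacent. -/
def simpleCycleCount {V : Type*} [Fintype V] [DecidableEq V] (G : SimpleGraph V)
    [DecidableRel G.Adj] (k : ℕ) [NeZero k] : ℕ :=
  (Finset.univ.filter (fun c : Fin k → V =>
    Function.Injective c ∧ ∀ j : Fin k, G.Adj (c j) (c (j + 1)))).card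

namespace FourCycleAux

variable {V : Type*} [Fintype V] [DecidableEq V] (G : SimpleGraph V) [DecidableRel G.Adj]

/-- Directed edges. -/
def DE : Finset (V × V) := univ.filter fun p => G.Adj p.1 p.2

/-- Common neighbors. -/
def CN (u v : V) : Finset V := univ.filter fun w => G.Adj u w ∧ G.Adj v w

lemma c3_eq : simpleCycleCount G 3 = ∑ p ∈ DE G, (CN G p.1 p.2).card := by
  rw [← Finset.card_sigma]
  unfold simpleCycleCount
  apply Finset.card_nbij' (i := fun c => ⟨(c 0, c 1), c 2⟩)
    (j := fun q => ![q.1.1, q.1.2, q.2])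
  · intro c hc
    simp only [mem_coe, mem_filter, mem_univ, true_and] at hc
    obtain ⟨hinj, hadj⟩ := hc
    have h0 := hadj 0
    have h1 := hadj 1
    have h2 := hadj 2
    have e2 : (2 : Fin 3) + 1 = 0 := by decide
    rw [e2] at h2
    simp only [mem_coe, Finset.mem_sigma, DE, CN, mem_filter, mem_univ, true_and]
    exact ⟨h0, h2.symm, h1⟩
  · rintro ⟨⟨u, v⟩, w⟩ hq
    simp only [mem_coe, Finset.mem_sigma, DE, CN, mem_filter, mem_univ, true_and] at hq
    obtain ⟨huv, huw, hvw⟩ := hq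
    simp only [mem_coe, mem_filter, mem_univ, true_and]
    constructor
    · intro a b hab
      fin_cases a <;> fin_cases b <;>
        simp_all [Matrix.cons_val_zero, Matrix.cons_val_one] <;>
        first
          | rfl
          | exact absurd hab (G.ne_of_adj huv)
          | exact absurd hab (G.ne_of_adj huv).symm
          | exact absurd hab (G.ne_of_adj huw)
          | exact absurd hab (G.ne_of_adj huw).symm
          | exact absurd hab (G.ne_of_adj hvw)
          | exact absurd hab (G.ne_of_adj hvw).symm
    · intro j
      fin_cases j <;> simp [huv, hvw, huw.symm]
  · intro c _
    funext a
    fin_cases a <;> simp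
  · rintro ⟨⟨u, v⟩, w⟩ _
    simp

lemma c4_ge : ∑ p ∈ DE G, (CN G p.1 p.2).offDiag.card ≤ simpleCycleCount G 4 := by
  rw [← Finset.card_sigma]
  unfold simpleCycleCount
  apply Finset.card_le_card_of_injOn
    (f := fun q => ![q.2.1, q.1.1, q.2.2, q.1.2])
  · rintro ⟨⟨u, v⟩, w, x⟩ hq
    simp only [mem_coe, Finset.mem_sigma, DE, CN, Finset.mem_offDiag, mem_filter, mem_univ,
      true_and] at hq
    obtain ⟨huv, ⟨huw, hvw⟩, ⟨hux, hvx⟩, hwx⟩ := hq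
    simp only [mem_coe, mem_filter, mem_univ, true_and]
    constructor
    · intro a b hab
      fin_cases a <;> fin_cases b <;>
        simp_all <;>
        first
          | rfl
          | exact absurd hab hwx
          | exact absurd hab (Ne.symm hwx)
          | exact absurd hab (G.ne_of_adj huv)
          | exact absurd hab (G.ne_of_adj huv).symm
          | exact absurd hab (G.ne_of_adj huw)
          | exact absurd hab (G.ne_of_adj huw).symm
          | exact absurd hab (G.ne_of_adj hvw)
          | exact absurd hab (G.ne_of_adj hvw).symm
          | exact absurd hab (G.ne_of_adj hux)
          | exact absurd hab (G.ne_of_adj hux).symm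
          | exact absurd hab (G.ne_of_adj hvx)
          | exact absurd hab (G.ne_of_adj hvx).symm
    · intro j
      fin_cases j <;> simp [huw.symm, hux, hvx.symm, hvw]
  · rintro ⟨⟨u, v⟩, w, x⟩ _ ⟨⟨u', v'⟩, w', x'⟩ _ h
    have h0 := congrFun h 0
    have h1 := congrFun h 1
    have h2 := congrFun h 2
    have h3 := congrFun h 3
    simp only [Matrix.cons_val_zero, Matrix.cons_val_one, Matrix.head_cons] at h0 h1 h2 h3
    simp_all

lemma de_card : (DE G).card = 2 * G.edgeFinset.card := by
  rw [SimpleGraph.two_mul_card_edgeFinset]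
  rfl

end FourCycleAux

open FourCycleAux in
/-- For any simple graph `G` on `n` vertices with average degree `d`,
`C₄(G) ≥ C₃(G) (C₃(G)/(n d) − 1)`, where `C_k` counts closed `k`-walks tracing simple
`k`-cycles. -/
theorem fourcycles_ge_triangles {V : Type*} [Fintype V] [DecidableEq V]
    (G : SimpleGraph V) [DecidableRel G.Adj] (n : ℕ) (d : ℝ)
    (hn : Fintype.card V = n)
    (hd : (n : ℝ) * d = 2 * (G.edgeFinset.card : ℝ)) :
    (simpleCycleCount G 4 : ℝ) ≥
      (simpleCycleCount G 3 : ℝ) * ((simpleCycleCount G 3 : ℝ) / ((n : ℝ) * d) - 1) := by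
  have hm : ((DE G).card : ℝ) = (n : ℝ) * d := by
    rw [de_card]; push_cast; linarith
  set t : V × V → ℝ := fun p => ((CN G p.1 p.2).card : ℝ) with ht
  have hC3 : (simpleCycleCount G 3 : ℝ) = ∑ p ∈ DE G, t p := by
    rw [c3_eq]; push_cast; rfl
  have hC4 : (simpleCycleCount G 4 : ℝ) ≥ ∑ p ∈ DE G, (t p ^ 2 - t p) := by
    calc ∑ p ∈ DE G, (t p ^ 2 - t p)
        = ∑ p ∈ DE G, ((CN G p.1 p.2).offDiag.card : ℝ) := by
          refine Finset.sum_congr rfl fun p _ => ?_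
          rw [Finset.offDiag_card]
          have hle : (CN G p.1 p.2).card ≤ (CN G p.1 p.2).card * (CN G p.1 p.2).card := by
            nlinarith [(CN G p.1 p.2).card.zero_le]
          rw [Nat.cast_sub hle]
          push_cast
          ring
      _ ≤ (simpleCycleCount G 4 : ℝ) := by
          rw [← Nat.cast_sum]
          exact_mod_cast c4_ge G
  rcases eq_or_ne ((n : ℝ) * d) 0 with h0 | h0
  · have hm0 : (DE G).card = 0 := by exact_mod_cast hm.trans h0
    have hde : DE G = ∅ := Finset.card_eq_zero.mp hm0
    have hc30 : (simpleCycleCount G 3 : ℝ) = 0 := by rw [hC3, hde]; simp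
    rw [hc30]
    simpa using Nat.cast_nonneg (simpleCycleCount G 4)
  · have hmpos : (0 : ℝ) < ((DE G).card : ℝ) := by
      rcases Nat.eq_zero_or_pos (DE G).card with h | h
      · exact absurd (hm.symm.trans (by exact_mod_cast h)) h0
      · exact_mod_cast h
    have cauchy : (∑ p ∈ DE G, t p) ^ 2 ≤ ((DE G).card : ℝ) * ∑ p ∈ DE G, t p ^ 2 :=
      sq_sum_le_card_mul_sum_sq
    have hdiv : (simpleCycleCount G 3 : ℝ) ^ 2 / ((n : ℝ) * d) ≤ ∑ p ∈ DE G, t p ^ 2 := by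
      rw [← hm, div_le_iff₀ hmpos, hC3]
      linarith [cauchy]
    have hsplit : ∑ p ∈ DE G, (t p ^ 2 - t p)
        = (∑ p ∈ DE G, t p ^ 2) - ∑ p ∈ DE G, t p := Finset.sum_sub_distrib _ _
    have hkey : (simpleCycleCount G 3 : ℝ) * ((simpleCycleCount G 3 : ℝ) / ((n : ℝ) * d) - 1)
        = (simpleCycleCount G 3 : ℝ) ^ 2 / ((n : ℝ) * d) - (simpleCycleCount G 3 : ℝ) := by
      ring
    rw [hkey]
    have := hC4
    rw [hsplit] at this
    linarith [hC3]
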